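/- Let 0 < α < β and p₁, p₂ > 0 with p₁ + p₂ = 1. Then there exists a constant C ≥ 1 such that for all n ≥ 1, C⁻¹·n^{−1/α} ≤ ∫₀¹ (x'_n(ω) − 1/2) dω ≤ C·n^{−1/α}, where the integral is with respect to Lebesgue measure on [0,1]. -/

import Mathlib

noncomputable section

open Real MeasureTheory Set Filter

/-- The LSV map `T_γ` on `[0,1]`: `x(1+2^γ x^γ)` on `[0,1/2]`, `2x-1` on `(1/2,1]`. -/
noncomputable def lsv (γ : ℝ) (x : ℝ) : ℝ :=
  if x ≤ 1 / 2 then x * (1 + 2 ^ γ * x ^ γ) else 2 * x - 1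

/-- The left branch of the LSV map. -/
noncomputable def lsvLeft (γ : ℝ) (x : ℝ) : ℝ := x * (1 + 2 ^ γ * x ^ γ)

/-- The random parameter selection: `α` for `ω ∈ [0,p₁)`, `β` for `ω ∈ [p₁,1]`. -/
noncomputable def sel (α β p₁ : ℝ) (ω : ℝ) : ℝ := if ω < p₁ then α else β

/-- The randomizing map `φ` on `[0,1]`. -/
noncomputable def phiMap (p₁ p₂ : ℝ) (ω : ℝ) : ℝ :=
  if ω < p₁ then ω / p₁ else (ω - p₁) / p₂

/-- The skew product `S(x,ω) = (T_{α(ω)}(x), φ(ω))`. -/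
noncomputable def skew (α β p₁ p₂ : ℝ) (z : ℝ × ℝ) : ℝ × ℝ :=
  (lsv (sel α β p₁ z.2) z.1, phiMap p₁ p₂ z.2)

/-- Random iterates: `randIter n ω = T_ω^n = T_{α(φ^{n-1}ω)} ∘ ⋯ ∘ T_{α(ω)}`. -/
noncomputable def randIter (α β p₁ p₂ : ℝ) : ℕ → ℝ → ℝ → ℝ
  | 0, _, x => x
  | n + 1, ω, x => randIter α β p₁ p₂ n (phiMap p₁ p₂ ω) (lsv (sel α β p₁ ω) x)

/-- The deterministic backward orbit `x_n^γ`: `x₀^γ = 1`, `x₁^γ = 1/2`, and for `n ≥ 2`,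
`x_n^γ` is the (unique) point of `(0,1/2]` with `T_γ(x_n^γ) = x_{n-1}^γ`. -/
def IsDetBackOrbit (γ : ℝ) (x : ℕ → ℝ) : Prop :=
  x 0 = 1 ∧ x 1 = 1 / 2 ∧
    ∀ n, 2 ≤ n → x n ∈ Set.Ioc (0 : ℝ) (1 / 2) ∧ lsv γ (x n) = x (n - 1)

/-- The random backward orbit `x_n(ω)`: `x₀(ω) = 1`, `x₁(ω) = 1/2`, and for `n ≥ 2`,
`x_n(ω)` is the (unique) point of `(0,1/2]` with `T_{α(ω)}(x_n(ω)) = x_{n-1}(φω)`. -/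
def IsRandBackOrbit (α β p₁ p₂ : ℝ) (X : ℕ → ℝ → ℝ) : Prop :=
  (∀ ω, X 0 ω = 1) ∧ (∀ ω, X 1 ω = 1 / 2) ∧
    ∀ n, 2 ≤ n → ∀ ω, X n ω ∈ Set.Ioc (0 : ℝ) (1 / 2) ∧
      lsv (sel α β p₁ ω) (X n ω) = X (n - 1) (phiMap p₁ p₂ ω)

/-- The points `x'_n(ω)`: `x'₀(ω) = 1`, `x'₁(ω) = 3/4`, and
`x'_n(ω) = (x_n(φω) + 1)/2` for `n ≥ 2`. -/
def IsRandBackOrbitPrime (p₁ p₂ : ℝ) (X X' : ℕ → ℝ → ℝ) : Prop :=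
  (∀ ω, X' 0 ω = 1) ∧ (∀ ω, X' 1 ω = 3 / 4) ∧
    ∀ n, 2 ≤ n → ∀ ω, X' n ω = (X n (phiMap p₁ p₂ ω) + 1) / 2

/-- First return time of `(x,ω)` to `(1/2,1] × [0,1]` under the skew product. -/
noncomputable def returnTime (α β p₁ p₂ : ℝ) (x ω : ℝ) : ℕ :=
  sInf {k : ℕ | 1 ≤ k ∧ 1 / 2 < randIter α β p₁ p₂ k ω x}

/- ===== auxiliary lemmas ===== -/

lemma lsvLeft_eq_of_nonneg (γ : ℝ) (hγ : 0 < γ) {x : ℝ} (hx : 0 ≤ x) :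
    lsvLeft γ x = x + 2 ^ γ * x ^ (1 + γ) := by
  rcases eq_or_lt_of_le hx with h | h
  · simp [lsvLeft, ← h, Real.zero_rpow (by positivity : (1:ℝ) + γ ≠ 0),
      Real.zero_rpow hγ.ne']
  · rw [lsvLeft, Real.rpow_add h, Real.rpow_one]; ring

lemma lsvLeft_strictMonoOn (γ : ℝ) (hγ : 0 < γ) :
    StrictMonoOn (lsvLeft γ) (Ici 0) := by
  intro x hx y hy hxy
  rw [lsvLeft_eq_of_nonneg γ hγ hx, lsvLeft_eq_of_nonneg γ hγ hy]
  have h2 : (0:ℝ) < 2 ^ γ := by positivity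
  have : x ^ (1 + γ) < y ^ (1 + γ) :=
    Real.rpow_lt_rpow hx hxy (by positivity)
  nlinarith

lemma rpow_neg_ge_one_sub (p u : ℝ) (hp : 0 ≤ p) (hu : 0 ≤ u) :
    1 - p * u ≤ (1 + u) ^ (-p) := by
  calc 1 - p * u ≤ Real.exp (-(p * u)) := by
        have := Real.add_one_le_exp (-(p*u)); linarith
    _ = Real.exp u ^ (-p) := by rw [← Real.exp_mul]; ring_nf
    _ ≤ (1 + u) ^ (-p) :=
        Real.rpow_le_rpow_of_nonpos (by linarith) (by linarith [Real.add_one_le_exp u])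
          (by linarith)

lemma rpow_neg_ge_one_add (p u : ℝ) (hp : 0 ≤ p) (hu : 0 ≤ u) (hu1 : u < 1) :
    1 + p * u ≤ (1 - u) ^ (-p) := by
  calc 1 + p * u ≤ Real.exp (p * u) := by
        have := Real.add_one_le_exp (p*u); linarith
    _ = Real.exp (-u) ^ (-p) := by rw [← Real.exp_mul]; ring_nf
    _ ≤ (1 - u) ^ (-p) := by
        apply Real.rpow_le_rpow_of_nonpos (by linarith)
        · have := Real.add_one_le_exp (-u); linarith
        · linarith

/-- A monotone inverse of the left branch. -/
noncomputable def gInv (γ : ℝ) (y : ℝ) : ℝ :=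
  sSup {x : ℝ | 0 ≤ x ∧ x ≤ 1/2 ∧ lsvLeft γ x ≤ y}

lemma gInv_monotone (γ : ℝ) : Monotone (gInv γ) := by
  intro y y' hyy'
  unfold gInv
  set S := {x : ℝ | 0 ≤ x ∧ x ≤ 1/2 ∧ lsvLeft γ x ≤ y}
  set S' := {x : ℝ | 0 ≤ x ∧ x ≤ 1/2 ∧ lsvLeft γ x ≤ y'}
  have hsub : S ⊆ S' := fun x hx => ⟨hx.1, hx.2.1, hx.2.2.trans hyy'⟩
  have hbdd : BddAbove S' := ⟨1/2, fun x hx => hx.2.1⟩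
  rcases Set.eq_empty_or_nonempty S with h | h
  · rw [h, Real.sSup_empty]
    rcases Set.eq_empty_or_nonempty S' with h' | h'
    · rw [h', Real.sSup_empty]
    · obtain ⟨x, hx⟩ := h'
      exact le_trans hx.1 (le_csSup hbdd hx)
  · exact csSup_le_csSup hbdd h hsub

lemma gInv_measurable (γ : ℝ) : Measurable (gInv γ) :=
  (gInv_monotone γ).measurable

lemma gInv_eq (γ : ℝ) (hγ : 0 < γ) {x y : ℝ} (hx : x ∈ Set.Ioc (0:ℝ) (1/2))
    (hxy : lsvLeft γ x = y) : gInv γ y = x := by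
  apply IsGreatest.csSup_eq
  constructor
  · exact ⟨hx.1.le, hx.2, hxy.le⟩
  · intro z hz
    by_contra hzx
    push_neg at hzx
    have := lsvLeft_strictMonoOn γ hγ hx.1.le hz.1 hzx
    rw [hxy] at this
    exact absurd hz.2.2 (not_le.mpr this)

lemma lsvLeft_eq_mul (γ : ℝ) {x : ℝ} (hx : 0 < x) :
    lsvLeft γ x = x * (1 + (2*x) ^ γ) := by
  rw [lsvLeft, Real.mul_rpow (by norm_num) hx.le]

lemma two_x_rpow_mem (γ : ℝ) (hγ : 0 < γ) {x : ℝ} (hx : x ∈ Set.Ioc (0:ℝ) (1/2)) :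
    (2*x) ^ γ ∈ Set.Ioc (0:ℝ) 1 := by
  constructor
  · exact Real.rpow_pos_of_pos (by linarith [hx.1]) _
  · exact Real.rpow_le_one (by linarith [hx.1]) (by linarith [hx.2]) hγ.le

lemma step_basic (γ : ℝ) (hγ : 0 < γ) {x : ℝ} (hx : x ∈ Set.Ioc (0:ℝ) (1/2)) :
    x ≤ lsvLeft γ x ∧ lsvLeft γ x ≤ 2*x := by
  have h := two_x_rpow_mem γ hγ hx
  rw [lsvLeft_eq_mul γ hx.1]
  constructor <;> nlinarith [hx.1, h.1, h.2]

lemma step_upper (α : ℝ) (hα : 0 < α) {x : ℝ} (hx : x ∈ Set.Ioc (0:ℝ) (1/2)) :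
    x ≤ lsvLeft α x - (lsvLeft α x) ^ (1+α) / 2 := by
  set y := lsvLeft α x with hy
  have hb := step_basic α hα hx
  have hy0 : 0 < y := lt_of_lt_of_le hx.1 hb.1
  have h1 : y ^ α ≤ (2*x) ^ α := Real.rpow_le_rpow hy0.le hb.2 hα.le
  have h2 : y ^ (1+α) = y * y ^ α := by
    rw [Real.rpow_add hy0, Real.rpow_one]
  have h3 : y - x = (2*x) ^ α * x := by
    rw [hy, lsvLeft_eq_mul α hx.1]; ring
  have h4 : y * y ^ α ≤ 2*x * ((2*x) ^ α) := by
    have : (0:ℝ) ≤ (2*x)^α := Real.rpow_nonneg (by linarith [hx.1]) _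
    nlinarith
  nlinarith [h2, h3, h4]

lemma step_lower (α γ : ℝ) (hα : 0 < α) (hγα : α ≤ γ) {x : ℝ}
    (hx : x ∈ Set.Ioc (0:ℝ) (1/2)) :
    x ^ (-α) ≤ (lsvLeft γ x) ^ (-α) + α * 2 ^ α := by
  have hγ : 0 < γ := lt_of_lt_of_le hα hγα
  set y := lsvLeft γ x with hy
  have hb := step_basic γ hγ hx
  have hy0 : 0 < y := lt_of_lt_of_le hx.1 hb.1
  set u : ℝ := (2*x) ^ α with hu
  have hu0 : u ∈ Set.Ioc (0:ℝ) 1 := two_x_rpow_mem α hα hx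
  have hgu : (2*x) ^ γ ≤ u :=
    Real.rpow_le_rpow_of_exponent_ge (by linarith [hx.1]) (by linarith [hx.2]) hγα
  have hyx : y ≤ x * (1 + u) := by
    rw [hy, lsvLeft_eq_mul γ hx.1]
    nlinarith [hx.1]
  have h1 : (x * (1 + u)) ^ (-α) ≤ y ^ (-α) :=
    Real.rpow_le_rpow_of_nonpos hy0 hyx (by linarith)
  have h2 : (x * (1 + u)) ^ (-α) = x ^ (-α) * (1+u) ^ (-α) :=
    Real.mul_rpow hx.1.le (by linarith [hu0.1])
  have h3 : 1 - α * u ≤ (1+u) ^ (-α) := rpow_neg_ge_one_sub α u hα.le hu0.1.le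
  have hx0 : (0:ℝ) < x ^ (-α) := Real.rpow_pos_of_pos hx.1 _
  have h4 : x ^ (-α) * (1 - α * u) ≤ x ^ (-α) * (1+u) ^ (-α) :=
    mul_le_mul_of_nonneg_left h3 hx0.le
  have h5 : x ^ (-α) * u = 2 ^ α := by
    rw [hu, Real.mul_rpow (by norm_num) hx.1.le,
      show x ^ (-α) * (2 ^ α * x ^ α) = 2 ^ α * (x ^ α * x ^ (-α)) from by ring,
      ← Real.rpow_add hx.1]
    simp
  nlinarith [h1, h2, h4, h5]

lemma recursion_step (α c : ℝ) (hα : 0 < α) (hc : 0 < c) (hc2 : c ≤ 1/2)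
    {e e' : ℝ} (he0 : 0 < e) (he1 : e ≤ 1) (he' : 0 < e')
    (hrec : e' ≤ e - c * e ^ (1+α)) :
    e ^ (-α) + α * c ≤ e' ^ (-α) := by
  set u : ℝ := c * e ^ α with hu
  have heα : e ^ α ≤ 1 := Real.rpow_le_one he0.le he1 hα.le
  have heα0 : 0 < e ^ α := Real.rpow_pos_of_pos he0 _
  have hu0 : 0 < u := by positivity
  have hu1 : u ≤ 1/2 := by nlinarith
  have hsplit : e - c * e ^ (1+α) = e * (1 - u) := by
    rw [Real.rpow_add he0, Real.rpow_one, hu]; ring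
  have h1 : (e * (1-u)) ^ (-α) ≤ e' ^ (-α) :=
    Real.rpow_le_rpow_of_nonpos he' (by linarith [hsplit ▸ hrec]) (by linarith)
  have h2 : (e * (1-u)) ^ (-α) = e ^ (-α) * (1-u) ^ (-α) :=
    Real.mul_rpow he0.le (by linarith)
  have h3 : 1 + α * u ≤ (1-u) ^ (-α) :=
    rpow_neg_ge_one_add α u hα.le hu0.le (by linarith)
  have hx0 : (0:ℝ) < e ^ (-α) := Real.rpow_pos_of_pos he0 _
  have h5 : e ^ (-α) * (e ^ α) = 1 := by
    rw [← Real.rpow_add he0]; simp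
  have h4 : e ^ (-α) * (1 + α * u) ≤ e ^ (-α) * (1-u) ^ (-α) :=
    mul_le_mul_of_nonneg_left h3 hx0.le
  have h6 : e ^ (-α) * (α * u) = α * c := by
    rw [hu, show e ^ (-α) * (α * (c * e ^ α)) = α * c * (e ^ (-α) * e ^ α) from by ring,
      h5, mul_one]
  nlinarith [h1, h2, h4, h6]

lemma le_of_rpow_neg_le (α u M : ℝ) (hα : 0 < α) (hu : 0 < u)
    (h : u ^ (-α) ≤ M) : M ^ (-(1/α)) ≤ u := by
  have h1 : M ^ (-(1/α)) ≤ (u ^ (-α)) ^ (-(1/α)) := by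
    apply Real.rpow_le_rpow_of_nonpos (Real.rpow_pos_of_pos hu _) h
    rw [neg_nonpos]; positivity
  calc M ^ (-(1/α)) ≤ (u ^ (-α)) ^ (-(1/α)) := h1
    _ = u := by
      rw [← Real.rpow_mul hu.le, show -α * -(1/α) = 1 by field_simp, Real.rpow_one]

lemma rpow_neg_le_of_le (α u M : ℝ) (hα : 0 < α) (hu : 0 < u) (hM : 0 < M)
    (h : M ≤ u ^ (-α)) : u ≤ M ^ (-(1/α)) := by
  have h1 : (u ^ (-α)) ^ (-(1/α)) ≤ M ^ (-(1/α)) := by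
    apply Real.rpow_le_rpow_of_nonpos hM h
    rw [neg_nonpos]; positivity
  calc u = (u ^ (-α)) ^ (-(1/α)) := by
        rw [← Real.rpow_mul hu.le, show -α * -(1/α) = 1 by field_simp, Real.rpow_one]
    _ ≤ M ^ (-(1/α)) := h1

section Transfer
variable {p₁ p₂ : ℝ}

lemma phiMap_measurable : Measurable (phiMap p₁ p₂) := by
  unfold phiMap
  exact Measurable.ite measurableSet_Iio (measurable_id.div_const _)
    ((measurable_id.sub_const _).div_const _)

lemma transfer_left (hp₁ : 0 < p₁) (h : ℝ → ℝ) :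
    (∫ ω in Ico (0:ℝ) p₁, h (phiMap p₁ p₂ ω)) = p₁ * ∫ ω in Icc (0:ℝ) 1, h ω := by
  have e1 : (∫ ω in Ico (0:ℝ) p₁, h (phiMap p₁ p₂ ω))
      = ∫ ω in Ico (0:ℝ) p₁, h (ω / p₁) := by
    apply setIntegral_congr_fun measurableSet_Ico
    intro ω hω
    simp only [phiMap, if_pos hω.2]
  rw [e1, setIntegral_congr_set Ico_ae_eq_Ioc,
    ← intervalIntegral.integral_of_le hp₁.le,
    intervalIntegral.integral_comp_div (fun x => h x) hp₁.ne',
    zero_div, div_self hp₁.ne', intervalIntegral.integral_of_le (by norm_num : (0:ℝ) ≤ 1),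
    ← integral_Icc_eq_integral_Ioc, smul_eq_mul]

lemma transfer_right (hp₂ : 0 < p₂) (hp : p₁ + p₂ = 1) (h : ℝ → ℝ) :
    (∫ ω in Icc p₁ 1, h (phiMap p₁ p₂ ω)) = p₂ * ∫ ω in Icc (0:ℝ) 1, h ω := by
  have e1 : (∫ ω in Icc p₁ 1, h (phiMap p₁ p₂ ω))
      = ∫ ω in Icc p₁ 1, h (ω / p₂ - p₁ / p₂) := by
    apply setIntegral_congr_fun measurableSet_Icc
    intro ω hω
    have : ¬ (ω < p₁) := not_lt.mpr hω.1
    simp only [phiMap, if_neg this, sub_div]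
  have hle : p₁ ≤ 1 := by linarith
  rw [e1, integral_Icc_eq_integral_Ioc, ← intervalIntegral.integral_of_le hle,
    intervalIntegral.integral_comp_div_sub (fun x => h x) hp₂.ne' (p₁/p₂)]
  rw [show p₁ / p₂ - p₁ / p₂ = (0:ℝ) by ring,
    show 1 / p₂ - p₁ / p₂ = (1:ℝ) by field_simp; linarith]
  rw [intervalIntegral.integral_of_le (by norm_num : (0:ℝ) ≤ 1),
    ← integral_Icc_eq_integral_Ioc, smul_eq_mul]

end Transfer

lemma integrableOn_of_bdd {f : ℝ → ℝ} (hf : Measurable f)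
    (hb : ∀ ω, |f ω| ≤ 1) {s : Set ℝ} (hs : s ⊆ Icc (0:ℝ) 1) :
    IntegrableOn f s volume := by
  apply IntegrableOn.mono_set (t := Icc (0:ℝ) 1) _ hs
  apply Measure.integrableOn_of_bounded (M := 1)
  · simp
  · exact hf.aestronglyMeasurable
  · exact Filter.Eventually.of_forall fun ω => by simpa using hb ω

lemma jensen_rpow {f : ℝ → ℝ} (p : ℝ) (hp : 1 ≤ p) (hf : Measurable f)
    (hmem : ∀ ω, f ω ∈ Icc (0:ℝ) 1) :
    (∫ ω in Icc (0:ℝ) 1, f ω) ^ p ≤ ∫ ω in Icc (0:ℝ) 1, (f ω) ^ p := by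
  haveI : IsProbabilityMeasure (volume.restrict (Icc (0:ℝ) 1)) := ⟨by simp⟩
  have hconv : ConvexOn ℝ (Icc (0:ℝ) 1) (fun x : ℝ => x ^ p) :=
    (convexOn_rpow hp).subset (Icc_subset_Ici_self) (convex_Icc _ _)
  have hcont : ContinuousOn (fun x : ℝ => x ^ p) (Icc (0:ℝ) 1) :=
    (Real.continuous_rpow_const (by linarith)).continuousOn
  have hfi : IntegrableOn f (Icc (0:ℝ) 1) volume := integrableOn_of_bdd hf
    (fun ω => abs_le.mpr ⟨by linarith [(hmem ω).1], (hmem ω).2⟩) (subset_refl _)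
  have hgm : Measurable (fun ω => (f ω) ^ p) :=
    (Real.continuous_rpow_const (by linarith : (0:ℝ) ≤ p)).measurable.comp hf
  have hgi : IntegrableOn (fun ω => (f ω) ^ p) (Icc (0:ℝ) 1) volume := by
    apply integrableOn_of_bdd hgm _ (subset_refl _)
    intro ω
    rw [abs_le]
    exact ⟨by linarith [Real.rpow_nonneg (hmem ω).1 p],
      Real.rpow_le_one (hmem ω).1 (hmem ω).2 (by linarith)⟩
  have := hconv.map_average_le (f := f) (μ := volume.restrict (Icc (0:ℝ) 1))
    hcont isClosed_Icc (Filter.Eventually.of_forall fun ω => hmem ω) hfi hgi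
  rwa [average_eq_integral, average_eq_integral] at this

section Orbit

variable {α β p₁ p₂ : ℝ} {X : ℕ → ℝ → ℝ}

lemma X_mem (hX : IsRandBackOrbit α β p₁ p₂ X) {n : ℕ} (hn : 1 ≤ n) (ω : ℝ) :
    X n ω ∈ Set.Ioc (0:ℝ) (1/2) := by
  rcases eq_or_lt_of_le hn with h | h
  · rw [← h, hX.2.1 ω]; constructor <;> norm_num
  · exact (hX.2.2 n h ω).1

lemma X_rel (hX : IsRandBackOrbit α β p₁ p₂ X) {n : ℕ} (hn : 2 ≤ n) (ω : ℝ) :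
    lsvLeft (sel α β p₁ ω) (X n ω) = X (n-1) (phiMap p₁ p₂ ω) := by
  have h := hX.2.2 n hn ω
  have hls : lsv (sel α β p₁ ω) (X n ω) = lsvLeft (sel α β p₁ ω) (X n ω) := by
    rw [lsv, if_pos h.1.2]; rfl
  rw [← hls]; exact h.2

lemma sel_ge (hα : 0 < α) (hαβ : α ≤ β) (ω : ℝ) : α ≤ sel α β p₁ ω := by
  unfold sel; split <;> linarith

lemma sel_pos (hα : 0 < α) (hαβ : α ≤ β) (ω : ℝ) : 0 < sel α β p₁ ω :=
  lt_of_lt_of_le hα (sel_ge hα hαβ ω)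

lemma X_meas (hα : 0 < α) (hαβ : α ≤ β) (hX : IsRandBackOrbit α β p₁ p₂ X) (n : ℕ) :
    Measurable (X n) := by
  induction n with
  | zero =>
    have : X 0 = fun _ => 1 := funext hX.1
    rw [this]; exact measurable_const
  | succ n ih =>
    rcases Nat.eq_zero_or_pos n with h0 | h0
    · subst h0
      have : X 1 = fun _ => 1/2 := funext hX.2.1
      rw [this]; exact measurable_const
    · have hn2 : 2 ≤ n + 1 := by omega
      have key : X (n+1) = fun ω =>
          if ω < p₁ then gInv α (X n (phiMap p₁ p₂ ω)) else gInv β (X n (phiMap p₁ p₂ ω)) := by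
        funext ω
        have hmem := X_mem hX (by omega : 1 ≤ n + 1) ω
        have hrel := X_rel hX hn2 ω
        rw [show n + 1 - 1 = n from rfl] at hrel
        have := gInv_eq (sel α β p₁ ω) (sel_pos hα hαβ ω) hmem hrel
        rw [← this]
        unfold sel
        split <;> rfl
      rw [key]
      exact Measurable.ite measurableSet_Iio
        ((gInv_measurable α).comp (ih.comp phiMap_measurable))
        ((gInv_measurable β).comp (ih.comp phiMap_measurable))

lemma X_pointwise (hα : 0 < α) (hαβ : α ≤ β) (hX : IsRandBackOrbit α β p₁ p₂ X) :
    ∀ n : ℕ, 1 ≤ n → ∀ ω : ℝ, (X n ω) ^ (-α) ≤ 2 ^ α + α * 2 ^ α * ((n:ℝ) - 1) := by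
  intro n hn
  induction n, hn using Nat.le_induction with
  | base =>
    intro ω
    rw [hX.2.1 ω, show (1:ℝ)/2 = 2⁻¹ by norm_num,
      Real.inv_rpow (by norm_num), Real.rpow_neg (by norm_num), inv_inv]
    simp
  | succ n hn ih =>
    intro ω
    have hmem := X_mem hX (by omega : 1 ≤ n + 1) ω
    have hrel := X_rel hX (by omega : 2 ≤ n + 1) ω
    rw [show n + 1 - 1 = n from rfl] at hrel
    have hstep := step_lower α (sel α β p₁ ω) hα (sel_ge hα hαβ ω) hmem
    rw [hrel] at hstep
    have ihφ := ih (phiMap p₁ p₂ ω)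
    push_cast
    push_cast at ihφ
    linarith

lemma X_lb (hα : 0 < α) (hαβ : α ≤ β) (hX : IsRandBackOrbit α β p₁ p₂ X)
    {n : ℕ} (hn : 1 ≤ n) (ω : ℝ) :
    (2 ^ α * (1 + α)) ^ (-(1/α)) * (n:ℝ) ^ (-(1/α)) ≤ X n ω := by
  have h2 : (0:ℝ) < 2 ^ α := by positivity
  have hn1 : (1:ℝ) ≤ (n:ℝ) := by exact_mod_cast hn
  have hM : (X n ω) ^ (-α) ≤ 2 ^ α * (1 + α) * (n:ℝ) := by
    have := X_pointwise hα hαβ hX n hn ω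
    nlinarith
  have := le_of_rpow_neg_le α (X n ω) (2 ^ α * (1 + α) * (n:ℝ)) hα
    (X_mem hX hn ω).1 hM
  rwa [Real.mul_rpow (by positivity) (by linarith)] at this

end Orbit


/-- For `0 < α < β` and `p₁, p₂ > 0` with `p₁ + p₂ = 1`, there is
`C ≥ 1` with `C⁻¹ n^{−1/α} ≤ ∫₀¹ (x'_n(ω) − 1/2) dω ≤ C n^{−1/α}` for all `n ≥ 1`. -/
theorem expectation_randBackOrbitPrime (α β p₁ p₂ : ℝ) (hα : 0 < α) (hαβ : α < β)
    (hp₁ : 0 < p₁) (hp₂ : 0 < p₂) (hp : p₁ + p₂ = 1)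
    (X X' : ℕ → ℝ → ℝ) (hX : IsRandBackOrbit α β p₁ p₂ X)
    (hX' : IsRandBackOrbitPrime p₁ p₂ X X') :
    ∃ C : ℝ, 1 ≤ C ∧ ∀ n : ℕ, 1 ≤ n →
      C⁻¹ * (n : ℝ) ^ (-(1 / α)) ≤ (∫ ω in Set.Icc (0 : ℝ) 1, (X' n ω - 1 / 2)) ∧
      (∫ ω in Set.Icc (0 : ℝ) 1, (X' n ω - 1 / 2)) ≤ C * (n : ℝ) ^ (-(1 / α)) := by
  have hp₁1 : p₁ ≤ 1 := by linarith
  have hXm : ∀ n, Measurable (X n) := X_meas hα hαβ.le hX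
  have hXbd : ∀ n, 1 ≤ n → ∀ ω, |X n ω| ≤ 1 := by
    intro n hn ω
    have h := X_mem hX hn ω
    rw [abs_le]; constructor <;> [linarith [h.1]; linarith [h.2]]
  have hXIcc : ∀ n, 1 ≤ n → ∀ ω, X n ω ∈ Set.Icc (0:ℝ) 1 := by
    intro n hn ω
    have h := X_mem hX hn ω
    exact ⟨h.1.le, by linarith [h.2]⟩
  have hIcosub : Ico (0:ℝ) p₁ ⊆ Icc (0:ℝ) 1 := fun x hx => ⟨hx.1, by linarith [hx.2]⟩
  have hIccsub : Icc p₁ (1:ℝ) ⊆ Icc (0:ℝ) 1 := fun x hx => ⟨by linarith [hx.1], hx.2⟩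
  have hdisj : Disjoint (Ico (0:ℝ) p₁) (Icc p₁ 1) := by
    rw [Set.disjoint_left]
    intro x hx hx'
    exact absurd hx.2 (not_lt.mpr hx'.1)
  have hsplit : ∀ f : ℝ → ℝ, IntegrableOn f (Ico (0:ℝ) p₁) volume →
      IntegrableOn f (Icc p₁ 1) volume →
      (∫ ω in Icc (0:ℝ) 1, f ω) = (∫ ω in Ico (0:ℝ) p₁, f ω) + ∫ ω in Icc p₁ 1, f ω := by
    intro f h1 h2
    rw [← Ico_union_Icc_eq_Icc hp₁.le hp₁1, setIntegral_union hdisj measurableSet_Icc h1 h2]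
  -- the expected value
  set E : ℕ → ℝ := fun n => ∫ ω in Icc (0:ℝ) 1, X n ω with hE
  have hEdef : ∀ k, E k = ∫ ω in Icc (0:ℝ) 1, X k ω := fun _ => rfl
  set c₁ : ℝ := (2 ^ α * (1 + α)) ^ (-(1/α)) with hc₁
  have hc₁0 : 0 < c₁ := Real.rpow_pos_of_pos (by positivity) _
  have hXint : ∀ n, 1 ≤ n → ∀ s : Set ℝ, s ⊆ Icc (0:ℝ) 1 → IntegrableOn (X n) s volume :=
    fun n hn s hs => integrableOn_of_bdd (hXm n) (hXbd n hn) hs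
  -- lower bound for E n
  have hElb : ∀ n : ℕ, 1 ≤ n → c₁ * (n:ℝ) ^ (-(1/α)) ≤ E n := by
    intro n hn
    have hconst : (∫ _ω in Icc (0:ℝ) 1, c₁ * (n:ℝ) ^ (-(1/α)))
        = c₁ * (n:ℝ) ^ (-(1/α)) := by
      rw [setIntegral_const]
      simp
    rw [← hconst]
    apply setIntegral_mono_on
    · exact integrableOn_const (by simp)
    · exact hXint n hn _ (subset_refl _)
    · exact measurableSet_Icc
    · intro ω _
      exact X_lb hα hαβ.le hX hn ω
  have hnpow_pos : ∀ n : ℕ, 1 ≤ n → (0:ℝ) < (n:ℝ) ^ (-(1/α)) := by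
    intro n hn
    apply Real.rpow_pos_of_pos
    exact_mod_cast hn
  have hEpos : ∀ n : ℕ, 1 ≤ n → 0 < E n := by
    intro n hn
    exact lt_of_lt_of_le (by positivity) (hElb n hn)
  have hEle : ∀ n : ℕ, 1 ≤ n → E n ≤ 1/2 := by
    intro n hn
    have hconst : (∫ _ω in Icc (0:ℝ) 1, (1/2:ℝ)) = 1/2 := by
      rw [setIntegral_const]; simp
    rw [← hconst]
    apply setIntegral_mono_on
    · exact hXint n hn _ (subset_refl _)
    · exact integrableOn_const (by simp)
    · exact measurableSet_Icc
    · intro ω _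
      exact (X_mem hX hn ω).2
  -- the recursion
  have hrec : ∀ n : ℕ, 1 ≤ n → E (n+1) ≤ E n - p₁/2 * (E n) ^ (1+α) := by
    intro n hn
    have hq1m : Measurable (fun ω => X n ω - (X n ω) ^ (1+α) / 2) := by
      apply (hXm n).sub
      exact ((Real.continuous_rpow_const (by linarith : (0:ℝ) ≤ 1 + α)).measurable.comp
        (hXm n)).div_const _
    have hq1bd : ∀ ω, |X n ω - (X n ω) ^ (1+α) / 2| ≤ 1 := by
      intro ω
      have h := X_mem hX hn ω
      have h1 : (0:ℝ) ≤ (X n ω) ^ (1+α) := Real.rpow_nonneg h.1.le _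
      have h2 : (X n ω) ^ (1+α) ≤ 1 :=
        Real.rpow_le_one h.1.le (by linarith [h.2]) (by linarith)
      rw [abs_le]; constructor <;> [linarith [h.1]; linarith [h.2]]
    have hcomp1m : Measurable (fun ω => X n (phiMap p₁ p₂ ω)
        - (X n (phiMap p₁ p₂ ω)) ^ (1+α) / 2) := hq1m.comp phiMap_measurable
    have hcomp1i : IntegrableOn (fun ω => X n (phiMap p₁ p₂ ω)
        - (X n (phiMap p₁ p₂ ω)) ^ (1+α) / 2) (Ico (0:ℝ) p₁) volume :=
      integrableOn_of_bdd hcomp1m (fun ω => hq1bd _) hIcosub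
    have hcomp2m : Measurable (fun ω => X n (phiMap p₁ p₂ ω)) :=
      (hXm n).comp phiMap_measurable
    have hcomp2i : IntegrableOn (fun ω => X n (phiMap p₁ p₂ ω)) (Icc p₁ 1) volume :=
      integrableOn_of_bdd hcomp2m (fun ω => hXbd n hn _) hIccsub
    have hrelrw : ∀ ω : ℝ, lsvLeft (sel α β p₁ ω) (X (n+1) ω) = X n (phiMap p₁ p₂ ω) := by
      intro ω
      have := X_rel hX (by omega : 2 ≤ n + 1) ω
      rwa [show n + 1 - 1 = n from rfl] at this
    -- piece 1
    have hpiece1 : (∫ ω in Ico (0:ℝ) p₁, X (n+1) ω)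
        ≤ ∫ ω in Ico (0:ℝ) p₁, (X n (phiMap p₁ p₂ ω)
            - (X n (phiMap p₁ p₂ ω)) ^ (1+α) / 2) := by
      apply setIntegral_mono_on (hXint (n+1) (by omega) _ hIcosub) hcomp1i measurableSet_Ico
      intro ω hω
      have hmem := X_mem hX (by omega : 1 ≤ n + 1) ω
      have hrel := hrelrw ω
      have hsel : sel α β p₁ ω = α := if_pos hω.2
      rw [hsel] at hrel
      have := step_upper α hα hmem
      rwa [hrel] at this
    -- piece 2
    have hpiece2 : (∫ ω in Icc p₁ 1, X (n+1) ω)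
        ≤ ∫ ω in Icc p₁ 1, X n (phiMap p₁ p₂ ω) := by
      apply setIntegral_mono_on (hXint (n+1) (by omega) _ hIccsub) hcomp2i measurableSet_Icc
      intro ω hω
      have hmem := X_mem hX (by omega : 1 ≤ n + 1) ω
      have hrel := hrelrw ω
      have hsel : sel α β p₁ ω = β := if_neg (not_lt.mpr hω.1)
      rw [hsel] at hrel
      have := (step_basic β (by linarith) hmem).1
      rwa [hrel] at this
    -- transfers
    have ht1 : (∫ ω in Ico (0:ℝ) p₁, (X n (phiMap p₁ p₂ ω)
          - (X n (phiMap p₁ p₂ ω)) ^ (1+α) / 2))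
        = p₁ * ∫ ω in Icc (0:ℝ) 1, (X n ω - (X n ω) ^ (1+α) / 2) :=
      transfer_left hp₁ (fun ω' => X n ω' - (X n ω') ^ (1+α) / 2)
    have ht2 : (∫ ω in Icc p₁ 1, X n (phiMap p₁ p₂ ω))
        = p₂ * ∫ ω in Icc (0:ℝ) 1, X n ω :=
      transfer_right hp₂ hp (X n)
    -- the power integral
    have hpm : Measurable (fun ω => (X n ω) ^ (1+α)) :=
      (Real.continuous_rpow_const (by linarith : (0:ℝ) ≤ 1 + α)).measurable.comp (hXm n)
    have hpi : IntegrableOn (fun ω => (X n ω) ^ (1+α)) (Icc (0:ℝ) 1) volume := by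
      apply integrableOn_of_bdd hpm _ (subset_refl _)
      intro ω
      have h := X_mem hX hn ω
      rw [abs_le]
      exact ⟨by linarith [Real.rpow_nonneg h.1.le (1+α)],
        Real.rpow_le_one h.1.le (by linarith [h.2]) (by linarith)⟩
    have hqsplit : (∫ ω in Icc (0:ℝ) 1, (X n ω - (X n ω) ^ (1+α) / 2))
        = E n - (∫ ω in Icc (0:ℝ) 1, (X n ω) ^ (1+α)) / 2 := by
      rw [integral_sub (hXint n hn _ (subset_refl _)) (hpi.div_const _), integral_div]
    have hjensen : (E n) ^ (1+α) ≤ ∫ ω in Icc (0:ℝ) 1, (X n ω) ^ (1+α) :=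
      jensen_rpow (1+α) (by linarith) (hXm n) (hXIcc n hn)
    have hsplitE : E (n+1) = (∫ ω in Ico (0:ℝ) p₁, X (n+1) ω)
        + ∫ ω in Icc p₁ 1, X (n+1) ω :=
      hsplit (X (n+1)) (hXint (n+1) (by omega) _ hIcosub) (hXint (n+1) (by omega) _ hIccsub)
    rw [hsplitE]
    rw [← hEdef n] at ht2
    have hchain : (∫ ω in Ico (0:ℝ) p₁, X (n+1) ω) + ∫ ω in Icc p₁ 1, X (n+1) ω
        ≤ p₁ * (E n - (∫ ω in Icc (0:ℝ) 1, (X n ω) ^ (1+α)) / 2) + p₂ * E n := by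
      have h1 := hpiece1
      rw [ht1, hqsplit] at h1
      have h2 := hpiece2
      rw [ht2] at h2
      linarith
    have hIlb := hjensen
    nlinarith [hchain, hjensen, hp₁, hEpos n hn]
  -- upper bound for E n
  have hEub_pow : ∀ n : ℕ, 1 ≤ n →
      2 ^ α + α * (p₁/2) * ((n:ℝ) - 1) ≤ (E n) ^ (-α) := by
    intro n hn
    induction n, hn using Nat.le_induction with
    | base =>
      have hE1 : E 1 = 1/2 := by
        rw [hEdef 1]
        have : (∫ ω in Icc (0:ℝ) 1, X 1 ω) = ∫ _ω in Icc (0:ℝ) 1, (1/2:ℝ) :=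
          setIntegral_congr_fun measurableSet_Icc (fun ω _ => hX.2.1 ω)
        rw [this, setIntegral_const]
        simp
      rw [hE1, show (1:ℝ)/2 = 2⁻¹ by norm_num, Real.inv_rpow (by norm_num),
        Real.rpow_neg (by norm_num), inv_inv]
      simp
    | succ n hn ih =>
      have hstep := recursion_step α (p₁/2) hα (by positivity) (by linarith)
        (hEpos n hn) (by linarith [hEle n hn]) (hEpos (n+1) (by omega)) (hrec n hn)
      push_cast
      push_cast at ih
      linarith
  set m : ℝ := min (2 ^ α) (α * (p₁/2)) with hm
  have hm0 : 0 < m := lt_min (by positivity) (by positivity)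
  have hEub : ∀ n : ℕ, 1 ≤ n → E n ≤ m ^ (-(1/α)) * (n:ℝ) ^ (-(1/α)) := by
    intro n hn
    have hn1 : (1:ℝ) ≤ (n:ℝ) := by exact_mod_cast hn
    have hMn : m * (n:ℝ) ≤ 2 ^ α + α * (p₁/2) * ((n:ℝ) - 1) := by
      have h1 : m ≤ 2 ^ α := min_le_left _ _
      have h2 : m ≤ α * (p₁/2) := min_le_right _ _
      nlinarith
    have := rpow_neg_le_of_le α (E n) (m * (n:ℝ)) hα (hEpos n hn) (by positivity)
      (le_trans hMn (hEub_pow n hn))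
    rwa [Real.mul_rpow hm0.le (by linarith)] at this
  -- choose the constant
  refine ⟨max (max 4 (2/c₁)) (m ^ (-(1/α))), ?_, ?_⟩
  · calc (1:ℝ) ≤ 4 := by norm_num
      _ ≤ max 4 (2/c₁) := le_max_left _ _
      _ ≤ _ := le_max_left _ _
  set C : ℝ := max (max 4 (2/c₁)) (m ^ (-(1/α))) with hC
  have hC4 : 4 ≤ C := le_trans (le_max_left _ _) (le_max_left _ _)
  have hCc : 2/c₁ ≤ C := le_trans (le_max_right _ _) (le_max_left _ _)
  have hC2 : m ^ (-(1/α)) ≤ C := le_max_right _ _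
  have hC0 : 0 < C := by linarith
  have hCinv : C⁻¹ ≤ c₁/2 := by
    have h1 : (0:ℝ) < 2/c₁ := by positivity
    calc C⁻¹ ≤ (2/c₁)⁻¹ := by
          apply inv_anti₀ h1 hCc
      _ = c₁/2 := by rw [inv_div]
  have hCinv4 : C⁻¹ ≤ 1/4 := by
    calc C⁻¹ ≤ 4⁻¹ := by apply inv_anti₀ (by norm_num) hC4
      _ = 1/4 := by norm_num
  intro n hn
  rcases eq_or_lt_of_le hn with h1 | h2
  · -- n = 1
    have hn1 : n = 1 := h1.symm
    subst hn1
    have hint : (∫ ω in Icc (0:ℝ) 1, (X' 1 ω - 1/2)) = 1/4 := by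
      have : (∫ ω in Icc (0:ℝ) 1, (X' 1 ω - 1/2)) = ∫ _ω in Icc (0:ℝ) 1, (1/4:ℝ) :=
        setIntegral_congr_fun measurableSet_Icc (fun ω _ => by rw [hX'.2.1 ω]; norm_num)
      rw [this, setIntegral_const]
      simp
    rw [hint, Nat.cast_one, Real.one_rpow, mul_one, mul_one]
    constructor
    · linarith
    · linarith
  · -- 2 ≤ n
    have hn2 : 2 ≤ n := h2
    have hn1 : 1 ≤ n := hn
    have hcompm : Measurable (fun ω => X n (phiMap p₁ p₂ ω)) :=
      (hXm n).comp phiMap_measurable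
    have heq : (∫ ω in Icc (0:ℝ) 1, (X' n ω - 1/2))
        = (∫ ω in Icc (0:ℝ) 1, X n (phiMap p₁ p₂ ω)) / 2 := by
      have e1 : (∫ ω in Icc (0:ℝ) 1, (X' n ω - 1/2))
          = ∫ ω in Icc (0:ℝ) 1, X n (phiMap p₁ p₂ ω) / 2 :=
        setIntegral_congr_fun measurableSet_Icc
          (fun ω _ => by rw [hX'.2.2 n hn2 ω]; ring)
      rw [e1, integral_div]
    have htrans : (∫ ω in Icc (0:ℝ) 1, X n (phiMap p₁ p₂ ω)) = E n := by
      rw [hsplit (fun ω => X n (phiMap p₁ p₂ ω))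
        (integrableOn_of_bdd hcompm (fun ω => hXbd n hn1 _) hIcosub)
        (integrableOn_of_bdd hcompm (fun ω => hXbd n hn1 _) hIccsub),
        transfer_left hp₁ (X n), transfer_right hp₂ hp (X n)]
      rw [hEdef n]
      linear_combination (∫ ω in Icc (0:ℝ) 1, X n ω) * hp
    rw [heq, htrans]
    have hnp := hnpow_pos n hn1
    constructor
    · have h1 : C⁻¹ * (n:ℝ) ^ (-(1/α)) ≤ c₁/2 * (n:ℝ) ^ (-(1/α)) :=
        mul_le_mul_of_nonneg_right hCinv hnp.le
      have h2 := hElb n hn1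
      linarith
    · have h1 : E n / 2 ≤ E n := by linarith [hEpos n hn1]
      have h2 := hEub n hn1
      have h3 : m ^ (-(1/α)) * (n:ℝ) ^ (-(1/α)) ≤ C * (n:ℝ) ^ (-(1/α)) :=
        mul_le_mul_of_nonneg_right hC2 hnp.le
      linarith
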